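/- Let R be an order in K, let O be the integral closure of Z in K, and let f = (R:O) = {x ∈ K : xO ⊆ R}. Then f contains an invertible element of K if and only if O is finitely generated as a Z-module. -/

import Mathlib

/-!
Setting: `Z` is a Dedekind domain (not a field) with fraction field `Q`;
`K i` (for `i : Fin n`) are finite field extensions of `Q` and
`K = K₁ ⊕ ⋯ ⊕ Kₙ` is modelled as the product `∀ i, K i`;
`O i = integralClosure Z (K i)` and `O = integralClosure Z (∀ i, K i)`;
`V = K₁^(s 1) ⊕ ⋯ ⊕ Kₙ^(s n)` is modelled as `∀ i, Fin (s i) → K i`,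
a module over `∀ i, K i` with the componentwise diagonal action.
-/

open Submodule

section Paper

variable (Z : Type) [CommRing Z] [IsDomain Z] [IsDedekindDomain Z]
  (Q : Type) [Field Q] [Algebra Z Q] [IsFractionRing Z Q]
  {n : ℕ} (K : Fin n → Type) [∀ i, Field (K i)]
  [∀ i, Algebra Q (K i)] [∀ i, FiniteDimensional Q (K i)]
  [∀ i, Algebra Z (K i)] [∀ i, IsScalarTower Z Q (K i)]

/-- A *lattice* in a finite-dimensional `Q`-vector space `W`: a finitely generated
sub-`Z`-module of `W` which contains a `Q`-basis of `W` (equivalently, spans `W` over `Q`). -/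
def IsLatticeIn {W : Type} [AddCommGroup W] [Module Q W] [Module Z W]
    (L : Submodule Z W) : Prop :=
  L.FG ∧ Submodule.span Q (L : Set W) = ⊤

/-- An *order* in `K = K₁ ⊕ ⋯ ⊕ Kₙ`: a subring of `K` which is a lattice in `K`
(equivalently, a `Z`-subalgebra whose underlying `Z`-module is a lattice in `K`). -/
def IsOrderIn (R : Subalgebra Z (∀ i, K i)) : Prop :=
  IsLatticeIn Z Q (Subalgebra.toSubmodule R)

/-- A sub-`Z`-module `M` of a `(∀ i, K i)`-module is a *sub-`R`-module* if it is stable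
under the order `R`, i.e. `r • v ∈ M` for all `r ∈ R` and `v ∈ M`. -/
def IsStableUnder {W : Type} [AddCommGroup W] [Module Z W] [Module (∀ i, K i) W]
    (R : Subalgebra Z (∀ i, K i)) (M : Submodule Z W) : Prop :=
  ∀ r ∈ R, ∀ v ∈ M, r • v ∈ M

/-- `M` and `N` are *isomorphic as `R`-modules*: there is an additive isomorphism
`M ≃ N` commuting with the action of every element of `R`. -/
def ModIso {W W' : Type} [AddCommGroup W] [Module Z W] [Module (∀ i, K i) W]
    [AddCommGroup W'] [Module Z W'] [Module (∀ i, K i) W']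
    (R : Subalgebra Z (∀ i, K i)) (M : Submodule Z W) (N : Submodule Z W') : Prop :=
  ∃ e : M ≃+ N, ∀ r ∈ R, ∀ (v : W) (hv : v ∈ M) (hrv : r • v ∈ M),
    ((e ⟨r • v, hrv⟩ : N) : W') = r • ((e ⟨v, hv⟩ : N) : W')

variable (s : Fin n → ℕ)

/-- The sub-`Z`-module of `V = ⊕ᵢ Kᵢ^(sᵢ)` cut out coordinatewise by a family of
submodules `W i j ⊆ Kᵢ`. -/
def piLatticeV (W : ∀ i, Fin (s i) → Submodule Z (K i)) :
    Submodule Z (∀ i, Fin (s i) → K i) where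
  carrier := {v | ∀ i j, v i j ∈ W i j}
  add_mem' := fun hu hv i j => (W i j).add_mem (hu i j) (hv i j)
  zero_mem' := fun i j => (W i j).zero_mem
  smul_mem' := fun z _ hv i j => (W i j).smul_mem z (hv i j)

/-- The sub-`Z`-module `I₁ ⊕ ⋯ ⊕ Iₙ` of `K = K₁ ⊕ ⋯ ⊕ Kₙ`. -/
def piIdeal (I : ∀ i, Submodule Z (K i)) : Submodule Z (∀ i, K i) where
  carrier := {x | ∀ i, x i ∈ I i}
  add_mem' := fun hu hv i => (I i).add_mem (hu i) (hv i)
  zero_mem' := fun i => (I i).zero_mem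
  smul_mem' := fun z _ hx i => (I i).smul_mem z (hx i)

/-- A *fractional `Oᵢ`-ideal*: a finitely generated `Oᵢ`-stable sub-`Z`-module of `Kᵢ`
containing a `Q`-basis of `Kᵢ`, where `Oᵢ` is the integral closure of `Z` in `Kᵢ`. -/
def IsFracIdealAt (i : Fin n) (I : Submodule Z (K i)) : Prop :=
  I.FG ∧ Submodule.span Q (I : Set (K i)) = ⊤ ∧
    ∀ r ∈ integralClosure Z (K i), ∀ x ∈ I, r * x ∈ I

/-- A *fractional ideal of the order `S`* in `K`: a finitely generated `S`-stable
sub-`Z`-module of `K` containing a `Q`-basis of `K`. -/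
def IsFracIdealOf (S : Subalgebra Z (∀ i, K i)) (J : Submodule Z (∀ i, K i)) : Prop :=
  J.FG ∧ Submodule.span Q (J : Set (∀ i, K i)) = ⊤ ∧ ∀ r ∈ S, ∀ x ∈ J, r * x ∈ J

/-- The family `(O₁, …, Oₙ)` of maximal orders, as submodules. -/
def maxFam : ∀ i : Fin n, Submodule Z (K i) :=
  fun i => Subalgebra.toSubmodule (integralClosure Z (K i))

/-- The module `⊕ᵢ (Oᵢ^(sᵢ-1) ⊕ Iᵢ)` inside `V`: in the `i`-th block, the first
`sᵢ - 1` coordinates are `Oᵢ` and the last one is `Iᵢ`. -/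
def stdMod (I : ∀ i, Submodule Z (K i)) : Submodule Z (∀ i, Fin (s i) → K i) :=
  piLatticeV Z K s (fun i j =>
    if (j : ℕ) + 1 < s i then Subalgebra.toSubmodule (integralClosure Z (K i)) else I i)

/-- The `i`-th component `fᵢ` of the conductor `f = (R : O)`:
those `a ∈ Kᵢ` with `a·Oᵢ ⊆ R` (via the canonical embedding `Kᵢ → K`). -/
def conductorComp (R : Subalgebra Z (∀ i, K i)) (i : Fin n) : Submodule Z (K i) where
  carrier := {a | ∀ b ∈ integralClosure Z (K i), Pi.single i (a * b) ∈ R}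
  add_mem' := by
    intro x y hx hy b hb
    simpa [add_mul, Pi.single_add] using R.add_mem (hx b hb) (hy b hb)
  zero_mem' := by
    intro b hb
    simpa using R.zero_mem
  smul_mem' := by
    intro z x hx b hb
    simpa [smul_mul_assoc, Pi.single_smul] using R.smul_mem (hx b hb) z

/-- The conductor `f = (R : O) = {x ∈ K : x·O ⊆ R}` as a sub-`Z`-module of `K`. -/
def conductorSub (R : Subalgebra Z (∀ i, K i)) : Submodule Z (∀ i, K i) where
  carrier := {x | ∀ y ∈ integralClosure Z (∀ i, K i), x * y ∈ R}
  add_mem' := by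
    intro x y hx hy b hb
    simpa [add_mul] using R.add_mem (hx b hb) (hy b hb)
  zero_mem' := by
    intro b hb
    simpa using R.zero_mem
  smul_mem' := by
    intro z x hx b hb
    simpa [smul_mul_assoc] using R.smul_mem (hx b hb) z

/-- The module `⊕ᵢ (fᵢ^(sᵢ-1) ⊕ fᵢIᵢ)` inside `V`, where `f = f₁ ⊕ ⋯ ⊕ fₙ` is the
conductor of the order `R` in the maximal order. -/
def stdModLow (R : Subalgebra Z (∀ i, K i)) (I : ∀ i, Submodule Z (K i)) :
    Submodule Z (∀ i, Fin (s i) → K i) :=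
  piLatticeV Z K s (fun i j =>
    if (j : ℕ) + 1 < s i then conductorComp Z K R i else conductorComp Z K R i * I i)

/-- `M·S`, the `S`-module generated by `M` (e.g. `M·O`): the smallest sub-`Z`-module
containing all `r • v` with `r ∈ S` and `v ∈ M`. -/
def extendOrd {W : Type} [AddCommGroup W] [Module Z W] [Module (∀ i, K i) W]
    (S : Subalgebra Z (∀ i, K i)) (M : Submodule Z W) : Submodule Z W :=
  Submodule.span Z {x | ∃ r ∈ S, ∃ v ∈ M, x = r • v}

/-- An *`R`-linear isomorphism between the quotient modules* `B/A` and `D/C`: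
an additive isomorphism compatible with the induced action of every `r ∈ R`. -/
def QuotModIso {W W' : Type} [AddCommGroup W] [Module Z W] [Module (∀ i, K i) W]
    [AddCommGroup W'] [Module Z W'] [Module (∀ i, K i) W']
    (R : Subalgebra Z (∀ i, K i)) (B A : Submodule Z W) (D C : Submodule Z W') : Prop :=
  ∃ e : (↥B ⧸ A.comap B.subtype) ≃+ (↥D ⧸ C.comap D.subtype),
    ∀ r ∈ R, ∀ (v : W) (hv : v ∈ B) (hrv : r • v ∈ B)
      (w : W') (hw : w ∈ D) (hrw : r • w ∈ D),
      e (Submodule.Quotient.mk ⟨v, hv⟩) = Submodule.Quotient.mk ⟨w, hw⟩ →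
      e (Submodule.Quotient.mk ⟨r • v, hrv⟩) = Submodule.Quotient.mk ⟨r • w, hrw⟩

/-- The set `M_I`: sub-`R`-modules `N` of `V` with
`⊕ᵢ(fᵢ^(sᵢ-1) ⊕ fᵢIᵢ) ⊆ N ⊆ ⊕ᵢ(Oᵢ^(sᵢ-1) ⊕ Iᵢ)` and `N·O = ⊕ᵢ(Oᵢ^(sᵢ-1) ⊕ Iᵢ)`;
these are exactly the preimages `q_I⁻¹(Ñ)` of the sub-`R`-modules `Ñ` of `Q(I)`
with `Ñ·O = Q(I)`. -/
def MSet (R : Subalgebra Z (∀ i, K i)) (I : ∀ i, Submodule Z (K i)) :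
    Set (Submodule Z (∀ i, Fin (s i) → K i)) :=
  {N | stdModLow Z K s R I ≤ N ∧ N ≤ stdMod Z K s I ∧ IsStableUnder Z K R N ∧
    extendOrd Z K (integralClosure Z (∀ i, K i)) N = stdMod Z K s I}

/-- The set `q_I⁻¹(ψ̃(q_O(M)))`, where `ψ̃` is realised by the additive equivalence `e`
between `Q(O) = (⊕ᵢ(Oᵢ^(sᵢ-1) ⊕ Oᵢ))/(⊕ᵢ(fᵢ^(sᵢ-1) ⊕ fᵢOᵢ))` and `Q(I)`. -/
def psiSet (R : Subalgebra Z (∀ i, K i)) (I : ∀ i, Submodule Z (K i))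
    (e : (↥(stdMod Z K s (maxFam Z K)) ⧸
            (stdModLow Z K s R (maxFam Z K)).comap (stdMod Z K s (maxFam Z K)).subtype) ≃+
         (↥(stdMod Z K s I) ⧸ (stdModLow Z K s R I).comap (stdMod Z K s I).subtype))
    (M : Submodule Z (∀ i, Fin (s i) → K i)) : Set (∀ i, Fin (s i) → K i) :=
  {v | ∃ (hv : v ∈ stdMod Z K s I), ∃ m, ∃ (_ : m ∈ M) (hmO : m ∈ stdMod Z K s (maxFam Z K)),
    e (Submodule.Quotient.mk ⟨m, hmO⟩) = Submodule.Quotient.mk ⟨v, hv⟩}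


theorem aux_fg_of_le {Z W : Type} [CommRing Z] [AddCommGroup W] [Module Z W]
    [IsNoetherianRing Z] {N M : Submodule Z W} (hN : N.FG) (h : M ≤ N) : M.FG := by
  haveI := isNoetherian_of_fg_of_noetherian _ hN
  have : M = (M.comap N.subtype).map N.subtype := by
    rw [Submodule.map_comap_subtype, inf_eq_right.mpr h]
  rw [this]
  exact (IsNoetherian.noetherian _).map _

/-- The conductor `f = (R : O)` contains an invertible element of `K`
if and only if `O` is finitely generated as a `Z`-module. -/
theorem statement11
    (hZ : ¬ IsField Z)
    (R : Subalgebra Z (∀ i, K i)) (hR : IsOrderIn Z Q K R) :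
    (∃ x : ∀ i, K i, IsUnit x ∧ x ∈ conductorSub Z K R) ↔
      (Subalgebra.toSubmodule (integralClosure Z (∀ i, K i))).FG := by
  constructor
  · rintro ⟨x, hx, hxf⟩
    obtain ⟨u, rfl⟩ := hx
    have hle : Subalgebra.toSubmodule (integralClosure Z (∀ i, K i)) ≤
        (Subalgebra.toSubmodule R).map (LinearMap.mulLeft Z ((↑u⁻¹ : ∀ i, K i))) := by
      intro b hb
      exact ⟨(↑u : ∀ i, K i) * b, hxf b hb, by
        simp [LinearMap.mulLeft_apply, ← mul_assoc]⟩
    exact aux_fg_of_le (hR.1.map _) hle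
  · rintro hfg
    obtain ⟨T, hT⟩ := hfg
    -- every element of K admits a nonzero Z-multiple lying in R
    have key : ∀ b : ∀ i, K i, ∃ z : Z, z ≠ 0 ∧
        z • b ∈ Subalgebra.toSubmodule R := by
      intro b
      have hb : b ∈ Submodule.span Q ((Subalgebra.toSubmodule R : Submodule Z (∀ i, K i)) :
          Set (∀ i, K i)) := hR.2 ▸ Submodule.mem_top
      induction hb using Submodule.span_induction with
      | mem x hx => exact ⟨1, one_ne_zero, by simpa using hx⟩
      | zero => exact ⟨1, one_ne_zero, by simp⟩
      | add x y _ _ ihx ihy =>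
        obtain ⟨z₁, hz₁, hz₁m⟩ := ihx
        obtain ⟨z₂, hz₂, hz₂m⟩ := ihy
        refine ⟨z₁ * z₂, mul_ne_zero hz₁ hz₂, ?_⟩
        have hx' : (z₁ * z₂) • x = z₂ • (z₁ • x) := by rw [mul_comm, mul_smul]
        have hy' : (z₁ * z₂) • y = z₁ • (z₂ • y) := by rw [mul_smul]
        rw [smul_add, hx', hy']
        exact Submodule.add_mem _ (Submodule.smul_mem _ _ hz₁m) (Submodule.smul_mem _ _ hz₂m)
      | smul q x _ ih =>
        obtain ⟨z, hz, hzm⟩ := ih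
        obtain ⟨⟨a, d⟩, hd⟩ := IsLocalization.surj (nonZeroDivisors Z) q
        refine ⟨d * z, mul_ne_zero (nonZeroDivisors.ne_zero d.2) hz, ?_⟩
        simp only at hd
        have h1 : ((d : Z) * z) • (q • x) = (a * z) • x := by
          rw [← smul_assoc]
          have h2 : ((d : Z) * z) • q = algebraMap Z Q (a * z) := by
            rw [Algebra.smul_def, map_mul, map_mul]
            linear_combination algebraMap Z Q z * hd
          rw [h2, algebraMap_smul]
        rw [h1, mul_smul]
        exact Submodule.smul_mem _ _ hzm
    -- get a common nonzero multiplier for the finite generating set T of O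
    have hTall : ∀ T' : Finset (∀ i, K i), ∃ z : Z, z ≠ 0 ∧
        ∀ b ∈ T', z • b ∈ Subalgebra.toSubmodule R := by
      classical
      intro T'
      induction T' using Finset.induction with
      | empty => exact ⟨1, one_ne_zero, by simp⟩
      | @insert c T'' hc ih =>
        obtain ⟨z, hz, hzm⟩ := ih
        obtain ⟨w, hw, hwm⟩ := key c
        refine ⟨z * w, mul_ne_zero hz hw, ?_⟩
        intro b hbmem
        rcases Finset.mem_insert.mp hbmem with rfl | hbT
        · rw [mul_smul]
          exact Submodule.smul_mem _ _ hwm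
        · rw [mul_comm, mul_smul]
          exact Submodule.smul_mem _ _ (hzm b hbT)
    obtain ⟨z, hz, hzm⟩ := hTall T
    -- z • O ⊆ R
    have hO : ∀ b ∈ Subalgebra.toSubmodule (integralClosure Z (∀ i, K i)),
        z • b ∈ Subalgebra.toSubmodule R := by
      intro b hb
      rw [← hT] at hb
      have hle : Submodule.span Z (T : Set (∀ i, K i)) ≤
          (Subalgebra.toSubmodule R).comap (z • (LinearMap.id : (∀ i, K i) →ₗ[Z] (∀ i, K i))) := by
        rw [Submodule.span_le]
        intro b hbT
        simpa using hzm b hbT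
      simpa using hle hb
    refine ⟨algebraMap Z (∀ i, K i) z, ?_, ?_⟩
    · have hnz : ∀ i, algebraMap Z (∀ i, K i) z i ≠ 0 := by
        intro i
        have heq : algebraMap Z (∀ i, K i) z i = algebraMap Q (K i) (algebraMap Z Q z) := by
          rw [← IsScalarTower.algebraMap_apply]
          rfl
        rw [heq]
        simp only [ne_eq, map_eq_zero]
        exact fun h => hz ((injective_iff_map_eq_zero _).mp (IsFractionRing.injective Z Q) z h)
      refine IsUnit.of_mul_eq_one (fun i => (algebraMap Z (∀ i, K i) z i)⁻¹) ?_
      funext i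
      exact mul_inv_cancel₀ (hnz i)
    · intro y hy
      have : algebraMap Z (∀ i, K i) z * y = z • y := (Algebra.smul_def z y).symm
      rw [this]
      exact hO y hy

end Paper
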